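/- Let L > 1, α > 0, C₁, C₂ > 0, z ∈ ℂ, and δω ∈ ℝ. Let G, g : Λ × Λ → ℂ be measurable with |G(x,y)| ≤ C₁ e^{−α|x−y|} and |g(y,x')| ≤ C₂ e^{−α|y−x'|} for all pairs in Λ × Λ. Define r(x,x') := −z ∫_Λ (e^{i δω fl(x,y,x')} − 1) · G(x,y) · g(y,x') dy. Then there exists a constant C₃ > 0 depending only on α, C₁, C₂ and |z| (in particular independent of L and of δω) such that |r(x,x')| ≤ C₃ |δω| e^{−(α/4)|x−x'|} for all x, x' ∈ Λ. -/

import Mathlib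

open MeasureTheory Real

noncomputable section

/-- The open cube `Λ = (−L/2, L/2)³ ⊂ ℝ³`. -/
def cube (L : ℝ) : Set (EuclideanSpace ℝ (Fin 3)) :=
  {x | ∀ i, x i ∈ Set.Ioo (-(L / 2)) (L / 2)}

/-- The magnetic phase `φ(x,x') = (x₂x₁' − x₁x₂')/2`. -/
def phi (x x' : EuclideanSpace ℝ (Fin 3)) : ℝ := (x 1 * x' 0 - x 0 * x' 1) / 2

/-- The magnetic flux through the triangle with vertices `x`, `y`, `x'`. -/
def fl (x y x' : EuclideanSpace ℝ (Fin 3)) : ℝ := phi x y + phi y x' + phi x' x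


lemma measurableSet_cube (L : ℝ) : MeasurableSet (cube L) := by
  have h : cube L = ⋂ i, (fun x : EuclideanSpace ℝ (Fin 3) => x i) ⁻¹' Set.Ioo (-(L/2)) (L/2) := by
    ext x; simp [cube]
  rw [h]
  exact MeasurableSet.iInter fun i =>
    (by measurability : Measurable fun x : EuclideanSpace ℝ (Fin 3) => x i) measurableSet_Ioo

lemma coord_abs_le_norm (x : EuclideanSpace ℝ (Fin 3)) (i : Fin 3) : |x i| ≤ ‖x‖ := by
  rw [EuclideanSpace.norm_eq, ← Real.sqrt_sq_eq_abs]
  apply Real.sqrt_le_sqrt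
  calc (x i)^2 = ‖x i‖^2 := by rw [Real.norm_eq_abs, sq_abs]
  _ ≤ ∑ j, ‖x j‖^2 := Finset.single_le_sum (f := fun j => ‖x j‖^2)
        (fun j _ => sq_nonneg _) (Finset.mem_univ i)

lemma abs_fl_le (x y x' : EuclideanSpace ℝ (Fin 3)) :
    |fl x y x'| ≤ ‖y - x‖ * ‖y - x'‖ := by
  have key : fl x y x' = -(((y - x) 1) * ((y - x') 0) - ((y - x) 0) * ((y - x') 1)) / 2 := by
    simp only [fl, phi, PiLp.sub_apply]; ring
  have h10 := coord_abs_le_norm (y - x) 0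
  have h11 := coord_abs_le_norm (y - x) 1
  have h20 := coord_abs_le_norm (y - x') 0
  have h21 := coord_abs_le_norm (y - x') 1
  have hn1 : (0:ℝ) ≤ ‖y - x‖ := norm_nonneg _
  have habs : |fl x y x'| = |((y - x) 1) * ((y - x') 0) - ((y - x) 0) * ((y - x') 1)| / 2 := by
    rw [key, abs_div, abs_neg, abs_two]
  rw [habs]
  have h1 : |((y - x) 1) * ((y - x') 0) - ((y - x) 0) * ((y - x') 1)| ≤
      |(y - x) 1| * |(y - x') 0| + |(y - x) 0| * |(y - x') 1| := by
    calc _ ≤ |((y - x) 1) * ((y - x') 0)| + |((y - x) 0) * ((y - x') 1)| := abs_sub _ _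
    _ = _ := by rw [abs_mul, abs_mul]
  have h2 : |(y - x) 1| * |(y - x') 0| ≤ ‖y - x‖ * ‖y - x'‖ :=
    mul_le_mul h11 h20 (abs_nonneg _) hn1
  have h3 : |(y - x) 0| * |(y - x') 1| ≤ ‖y - x‖ * ‖y - x'‖ :=
    mul_le_mul h10 h21 (abs_nonneg _) hn1
  linarith

lemma norm_exp_I_mul_sub_one_le (θ : ℝ) : ‖Complex.exp (Complex.I * θ) - 1‖ ≤ |θ| := by
  have h : Complex.exp (Complex.I * (θ:ℂ)) =
      (Real.cos θ : ℂ) + (Real.sin θ : ℂ) * Complex.I := by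
    rw [mul_comm, Complex.exp_mul_I, Complex.ofReal_cos, Complex.ofReal_sin]
  have hsq : ‖Complex.exp (Complex.I * (θ:ℂ)) - 1‖^2 = (Real.cos θ - 1)^2 + (Real.sin θ)^2 := by
    rw [h, Complex.sq_norm, Complex.normSq_apply]
    simp [Complex.cos_ofReal_re, Complex.sin_ofReal_re]
    ring
  have hb := Real.one_sub_sq_div_two_le_cos (x := θ)
  have hs := Real.sin_sq_add_cos_sq θ
  have h2 : ‖Complex.exp (Complex.I * (θ:ℂ)) - 1‖^2 ≤ |θ|^2 := by
    rw [hsq, sq_abs]; nlinarith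
  nlinarith [norm_nonneg (Complex.exp (Complex.I * (θ:ℂ)) - 1), abs_nonneg θ]

lemma mul_exp_le (c t : ℝ) (hc : 0 < c) (ht : 0 ≤ t) : t * Real.exp (-(c * t)) ≤ 1 / c := by
  rw [Real.exp_neg, ← div_eq_mul_inv, div_le_div_iff₀ (Real.exp_pos _) hc]
  nlinarith [Real.add_one_le_exp (c * t)]

lemma exp_le_aux {c t : ℝ} (hc : 0 < c) (ht : 0 ≤ t) :
    Real.exp (-(c * t)) ≤ (1 + 4 / c) ^ 4 * (1 + t) ^ (-(4:ℝ)) := by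
  have h3 : (4 / c) * (c * t / 4) = t := by field_simp
  have h2 : c * t / 4 + 1 ≤ Real.exp (c * t / 4) := Real.add_one_le_exp _
  have h4 : (1 + 4/c) * (c * t / 4 + 1) ≤ (1 + 4/c) * Real.exp (c * t / 4) :=
    mul_le_mul_of_nonneg_left h2 (by positivity)
  have h1 : 1 + t ≤ (1 + 4/c) * Real.exp (c * t / 4) := by nlinarith [mul_nonneg hc.le ht, (by positivity : (0:ℝ) ≤ 4 / c)]
  have h5 : (1 + t) ^ 4 ≤ ((1 + 4/c) * Real.exp (c * t / 4)) ^ 4 :=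
    pow_le_pow_left₀ (by positivity) h1 4
  have h6 : (1 + t) ^ 4 ≤ (1 + 4/c) ^ 4 * Real.exp (c * t) := by
    have : ((1 + 4/c) * Real.exp (c * t / 4)) ^ 4 = (1 + 4/c)^4 * Real.exp (c*t/4) ^ 4 := by ring
    have he : Real.exp (c*t/4) ^ 4 = Real.exp (c*t) := by
      rw [← Real.exp_nat_mul]; congr 1; push_cast; ring
    rw [this, he] at h5; exact h5
  rw [Real.rpow_neg (by positivity), show ((4:ℝ)) = ((4:ℕ):ℝ) by norm_num, Real.rpow_natCast,
    Real.exp_neg]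
  calc (Real.exp (c * t))⁻¹ ≤ ((1 + t)^4 / (1 + 4/c)^4)⁻¹ := by
        apply inv_anti₀ (by positivity)
        rw [div_le_iff₀ (by positivity)]
        nlinarith [h6]
  _ = (1 + 4/c)^4 * ((1 + t)^4)⁻¹ := by rw [inv_div, div_eq_mul_inv]

lemma integrable_exp_neg_norm {c : ℝ} (hc : 0 < c) :
    Integrable (fun y : EuclideanSpace ℝ (Fin 3) => Real.exp (-c * ‖y‖)) := by
  have hd : (Module.finrank ℝ (EuclideanSpace ℝ (Fin 3)) : ℝ) < 4 := by
    simp [finrank_euclideanSpace_fin]; norm_num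
  apply Integrable.mono'
    ((integrable_one_add_norm (E := EuclideanSpace ℝ (Fin 3)) (μ := volume) hd).const_mul
      ((1 + 4 / c) ^ 4))
  · exact (Continuous.aestronglyMeasurable (by continuity))
  · refine ae_of_all _ fun y => ?_
    rw [Real.norm_eq_abs, abs_of_nonneg (Real.exp_pos _).le, neg_mul]
    exact exp_le_aux hc (norm_nonneg y)

lemma pointwise_bound (α C₁ C₂ : ℝ) (hα : 0 < α) (hC₁ : 0 ≤ C₁) (hC₂ : 0 ≤ C₂) (δω : ℝ)
    (x y x' : EuclideanSpace ℝ (Fin 3)) (E1 E2 : ℂ)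
    (hG : ‖E1‖ ≤ C₁ * Real.exp (-α * ‖x - y‖))
    (hg : ‖E2‖ ≤ C₂ * Real.exp (-α * ‖y - x'‖)) :
    ‖(Complex.exp (Complex.I * (δω:ℂ) * ((fl x y x' : ℝ):ℂ)) - 1) * E1 * E2‖ ≤
      C₁ * C₂ * (4/α^2) * |δω| * Real.exp (-(α/4) * ‖x - x'‖) * Real.exp (-(α/4) * ‖x - y‖) := by
  have ha : (0:ℝ) ≤ ‖x - y‖ := norm_nonneg _
  have hb : (0:ℝ) ≤ ‖y - x'‖ := norm_nonneg _
  have htri : ‖x - x'‖ ≤ ‖x - y‖ + ‖y - x'‖ := by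
    have := dist_triangle x y x'
    simpa [dist_eq_norm] using this
  -- bound on the exponential factor
  have hE : ‖Complex.exp (Complex.I * (δω:ℂ) * ((fl x y x' : ℝ):ℂ)) - 1‖ ≤
      |δω| * (‖x - y‖ * ‖y - x'‖) := by
    have h1 : Complex.I * (δω:ℂ) * ((fl x y x' : ℝ):ℂ) =
        Complex.I * (((δω * fl x y x' : ℝ)):ℂ) := by push_cast; ring
    calc ‖Complex.exp (Complex.I * (δω:ℂ) * ((fl x y x' : ℝ):ℂ)) - 1‖
        ≤ |δω * fl x y x'| := by rw [h1]; exact norm_exp_I_mul_sub_one_le _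
    _ = |δω| * |fl x y x'| := abs_mul _ _
    _ ≤ |δω| * (‖x - y‖ * ‖y - x'‖) := by
        apply mul_le_mul_of_nonneg_left _ (abs_nonneg δω)
        have := abs_fl_le x y x'
        rwa [norm_sub_rev y x] at this
  -- single-factor decay improvements
  have tfac : ∀ t : ℝ, 0 ≤ t → t * Real.exp (-α * t) ≤ (2/α) * Real.exp (-(α/2) * t) := by
    intro t ht
    have h3 : t * Real.exp (-(α/2 * t)) ≤ 1 / (α/2) := mul_exp_le (α/2) t (by positivity) ht
    have h4 : (1:ℝ) / (α/2) = 2/α := one_div_div α 2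
    have h2 : Real.exp (-α * t) = Real.exp (-(α/2) * t) * Real.exp (-(α/2) * t) := by
      rw [← Real.exp_add]; ring_nf
    calc t * Real.exp (-α * t) = (t * Real.exp (-(α/2 * t))) * Real.exp (-(α/2) * t) := by
          rw [h2, show -(α/2 * t) = -(α/2) * t by ring]; ring
    _ ≤ (2/α) * Real.exp (-(α/2) * t) := by
          rw [← h4]; exact mul_le_mul_of_nonneg_right h3 (Real.exp_pos _).le
  have tA := tfac _ ha
  have tB := tfac _ hb
  have h3exp : Real.exp (-(α/2) * ‖x - y‖) * Real.exp (-(α/2) * ‖y - x'‖) ≤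
      Real.exp (-(α/4) * ‖x - x'‖) * Real.exp (-(α/4) * ‖x - y‖) := by
    rw [← Real.exp_add, ← Real.exp_add]
    apply Real.exp_le_exp.mpr
    nlinarith [mul_le_mul_of_nonneg_left htri (by positivity : (0:ℝ) ≤ α/4),
      mul_nonneg hα.le hb, mul_nonneg hα.le ha]
  calc ‖(Complex.exp (Complex.I * (δω:ℂ) * ((fl x y x' : ℝ):ℂ)) - 1) * E1 * E2‖
      = ‖Complex.exp (Complex.I * (δω:ℂ) * ((fl x y x' : ℝ):ℂ)) - 1‖ * ‖E1‖ * ‖E2‖ := by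
        rw [norm_mul, norm_mul]
  _ ≤ (|δω| * (‖x - y‖ * ‖y - x'‖)) * (C₁ * Real.exp (-α * ‖x - y‖)) *
        (C₂ * Real.exp (-α * ‖y - x'‖)) := by
      apply mul_le_mul _ hg (norm_nonneg _)
        (mul_nonneg (mul_nonneg (abs_nonneg _) (mul_nonneg ha hb))
          (mul_nonneg hC₁ (Real.exp_pos _).le))
      exact mul_le_mul hE hG (norm_nonneg _) (mul_nonneg (abs_nonneg _) (mul_nonneg ha hb))
  _ = (|δω| * C₁ * C₂) * ((‖x - y‖ * Real.exp (-α * ‖x - y‖)) *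
        (‖y - x'‖ * Real.exp (-α * ‖y - x'‖))) := by ring
  _ ≤ (|δω| * C₁ * C₂) * (((2/α) * Real.exp (-(α/2) * ‖x - y‖)) *
        ((2/α) * Real.exp (-(α/2) * ‖y - x'‖))) := by
      apply mul_le_mul_of_nonneg_left _ (mul_nonneg (mul_nonneg (abs_nonneg _) hC₁) hC₂)
      exact mul_le_mul tA tB (mul_nonneg hb (Real.exp_pos _).le) (by positivity)
  _ = (|δω| * C₁ * C₂ * (4/α^2)) *
        (Real.exp (-(α/2) * ‖x - y‖) * Real.exp (-(α/2) * ‖y - x'‖)) := by ring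
  _ ≤ (|δω| * C₁ * C₂ * (4/α^2)) *
        (Real.exp (-(α/4) * ‖x - x'‖) * Real.exp (-(α/4) * ‖x - y‖)) := by
      apply mul_le_mul_of_nonneg_left h3exp
      have h4 : (0:ℝ) ≤ 4/α^2 := by positivity
      exact mul_nonneg (mul_nonneg (mul_nonneg (abs_nonneg _) hC₁) hC₂) h4
  _ = C₁ * C₂ * (4/α^2) * |δω| * Real.exp (-(α/4) * ‖x - x'‖) *
        Real.exp (-(α/4) * ‖x - y‖) := by ring


/-- If `|G(x,y)| ≤ C₁e^{−α|x−y|}` and `|g(y,x')| ≤ C₂e^{−α|y−x'|}` on `Λ × Λ`, then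
the kernel `r(x,x') = −z ∫_Λ (e^{iδω fl(x,y,x')} − 1) G(x,y) g(y,x') dy` satisfies
`|r(x,x')| ≤ C₃ |δω| e^{−(α/4)|x−x'|}` with `C₃` depending only on `α, C₁, C₂, |z|`
(in particular independent of `L` and of `δω`). -/
theorem r_kernel_bound (α C₁ C₂ : ℝ) (hα : 0 < α) (hC₁ : 0 < C₁) (hC₂ : 0 < C₂)
    (z : ℂ) :
    ∃ C₃ : ℝ, 0 < C₃ ∧ ∀ L : ℝ, 1 < L → ∀ δω : ℝ,
      ∀ G g : EuclideanSpace ℝ (Fin 3) → EuclideanSpace ℝ (Fin 3) → ℂ,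
        Measurable (Function.uncurry G) → Measurable (Function.uncurry g) →
        (∀ x ∈ cube L, ∀ y ∈ cube L, ‖G x y‖ ≤ C₁ * Real.exp (-α * ‖x - y‖)) →
        (∀ y ∈ cube L, ∀ x' ∈ cube L, ‖g y x'‖ ≤ C₂ * Real.exp (-α * ‖y - x'‖)) →
        ∀ x ∈ cube L, ∀ x' ∈ cube L,
          ‖-z * ∫ y in cube L,
              (Complex.exp (Complex.I * (δω : ℂ) * (fl x y x' : ℝ)) - 1) *
                G x y * g y x'‖ ≤ C₃ * |δω| * Real.exp (-(α / 4) * ‖x - x'‖) := by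
  have hc4 : (0:ℝ) < α/4 := by positivity
  set Kα := ∫ y : EuclideanSpace ℝ (Fin 3), Real.exp (-(α/4) * ‖y‖) with hKα
  have hKα0 : 0 ≤ Kα := integral_nonneg fun y => (Real.exp_pos _).le
  have hintf : Integrable (fun y : EuclideanSpace ℝ (Fin 3) => Real.exp (-(α/4) * ‖y‖)) :=
    integrable_exp_neg_norm hc4
  refine ⟨‖z‖ * (C₁ * C₂ * (4/α^2)) * Kα + 1, ?_, ?_⟩
  · have h0 : 0 ≤ ‖z‖ * (C₁ * C₂ * (4/α^2)) * Kα :=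
      mul_nonneg (mul_nonneg (norm_nonneg z) (by positivity)) hKα0
    linarith
  intro L hL δω G g hGm hgm hG hg x hx x' hx'
  have hint2 : Integrable (fun y : EuclideanSpace ℝ (Fin 3) =>
      Real.exp (-(α/4) * ‖x - y‖)) := hintf.comp_sub_left x
  have hmaj : Integrable (fun y : EuclideanSpace ℝ (Fin 3) =>
      C₁ * C₂ * (4/α^2) * |δω| * Real.exp (-(α/4) * ‖x - x'‖) *
        Real.exp (-(α/4) * ‖x - y‖)) :=
    hint2.const_mul _
  have hpt : ∀ y ∈ cube L,
      ‖(Complex.exp (Complex.I * (δω : ℂ) * (fl x y x' : ℝ)) - 1) * G x y * g y x'‖ ≤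
        C₁ * C₂ * (4/α^2) * |δω| * Real.exp (-(α/4) * ‖x - x'‖) *
          Real.exp (-(α/4) * ‖x - y‖) := fun y hy =>
    pointwise_bound α C₁ C₂ hα hC₁.le hC₂.le δω x y x' (G x y) (g y x')
      (hG x hx y hy) (hg y hy x' hx')
  have key : ‖∫ y in cube L,
      (Complex.exp (Complex.I * (δω : ℂ) * (fl x y x' : ℝ)) - 1) * G x y * g y x'‖ ≤
      ∫ y in cube L, C₁ * C₂ * (4/α^2) * |δω| * Real.exp (-(α/4) * ‖x - x'‖) *
        Real.exp (-(α/4) * ‖x - y‖) :=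
    norm_integral_le_of_norm_le hmaj.integrableOn
      ((ae_restrict_iff' (measurableSet_cube L)).mpr (ae_of_all _ hpt))
  have hnn : ∀ y : EuclideanSpace ℝ (Fin 3),
      0 ≤ C₁ * C₂ * (4/α^2) * |δω| * Real.exp (-(α/4) * ‖x - x'‖) *
        Real.exp (-(α/4) * ‖x - y‖) := fun y =>
    mul_nonneg (mul_nonneg (mul_nonneg (mul_nonneg (mul_nonneg hC₁.le hC₂.le)
      (by positivity)) (abs_nonneg _)) (Real.exp_pos _).le) (Real.exp_pos _).le
  have step2 : (∫ y in cube L, C₁ * C₂ * (4/α^2) * |δω| * Real.exp (-(α/4) * ‖x - x'‖) *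
        Real.exp (-(α/4) * ‖x - y‖)) ≤
      ∫ y : EuclideanSpace ℝ (Fin 3), C₁ * C₂ * (4/α^2) * |δω| *
        Real.exp (-(α/4) * ‖x - x'‖) * Real.exp (-(α/4) * ‖x - y‖) :=
    setIntegral_le_integral hmaj (ae_of_all _ hnn)
  have step3 : (∫ y : EuclideanSpace ℝ (Fin 3), C₁ * C₂ * (4/α^2) * |δω| *
        Real.exp (-(α/4) * ‖x - x'‖) * Real.exp (-(α/4) * ‖x - y‖)) =
      C₁ * C₂ * (4/α^2) * |δω| * Real.exp (-(α/4) * ‖x - x'‖) * Kα := by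
    rw [integral_const_mul]
    congr 1
    have h := integral_sub_right_eq_self (μ := volume)
      (fun t : EuclideanSpace ℝ (Fin 3) => Real.exp (-(α/4) * ‖t‖)) x
    simp_rw [norm_sub_rev x]
    exact h
  calc ‖-z * ∫ y in cube L,
      (Complex.exp (Complex.I * (δω : ℂ) * (fl x y x' : ℝ)) - 1) * G x y * g y x'‖
      = ‖z‖ * ‖∫ y in cube L,
        (Complex.exp (Complex.I * (δω : ℂ) * (fl x y x' : ℝ)) - 1) * G x y * g y x'‖ := by
        rw [norm_mul, norm_neg]
  _ ≤ ‖z‖ * ∫ y in cube L, C₁ * C₂ * (4/α^2) * |δω| * Real.exp (-(α/4) * ‖x - x'‖) *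
        Real.exp (-(α/4) * ‖x - y‖) := mul_le_mul_of_nonneg_left key (norm_nonneg z)
  _ ≤ ‖z‖ * ∫ y : EuclideanSpace ℝ (Fin 3), C₁ * C₂ * (4/α^2) * |δω| *
        Real.exp (-(α/4) * ‖x - x'‖) * Real.exp (-(α/4) * ‖x - y‖) :=
      mul_le_mul_of_nonneg_left step2 (norm_nonneg z)
  _ = (‖z‖ * (C₁ * C₂ * (4/α^2)) * Kα) * (|δω| * Real.exp (-(α/4) * ‖x - x'‖)) := by
      rw [step3]; ring
  _ ≤ (‖z‖ * (C₁ * C₂ * (4/α^2)) * Kα + 1) * |δω| * Real.exp (-(α/4) * ‖x - x'‖) := by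
      have h2 : 0 ≤ |δω| * Real.exp (-(α/4) * ‖x - x'‖) :=
        mul_nonneg (abs_nonneg _) (Real.exp_pos _).le
      calc (‖z‖ * (C₁ * C₂ * (4/α^2)) * Kα) * (|δω| * Real.exp (-(α/4) * ‖x - x'‖))
          ≤ (‖z‖ * (C₁ * C₂ * (4/α^2)) * Kα + 1) * (|δω| * Real.exp (-(α/4) * ‖x - x'‖)) :=
            mul_le_mul_of_nonneg_right (by linarith) h2
      _ = _ := by ring
  _ = (‖z‖ * (C₁ * C₂ * (4/α^2)) * Kα + 1) * |δω| * Real.exp (-(α / 4) * ‖x - x'‖) := by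
      norm_num
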